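/- Every finite join-distributive lattice admits an SB-labeling; in particular, the labeling assigning to each covering pair (x, y) the unique new element of the corresponding feasible set (via the antimatroid representation) is an SB-labeling. -/

import Mathlib

variable {α : Type*}

/-- A saturated chain from `x` to `y`: a list starting at `x`, ending at `y`, each
consecutive pair a covering pair. -/
def IsSatChain [PartialOrder α] (c : List α) (x y : α) : Prop :=
  c.head? = some x ∧ c.getLast? = some y ∧ List.Chain' (· ⋖ ·) c

/-- The list of labels used by a chain `c` under the edge-labeling `lam`. -/
def chainLabels {Λ : Type*} (lam : α → α → Λ) (c : List α) : List Λ :=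
  (c.zip c.tail).map fun p => lam p.1 p.2

/-- An SB-labeling of a lattice: an edge-labeling `lam` of covering pairs such that for all
`p ⋖ p₁, p₂` with `p₁ ≠ p₂`: the two labels differ, every saturated chain from `p` to
`p₁ ⊔ p₂` uses both labels, and uses no other label. -/
def IsSBLabeling [Lattice α] {Λ : Type*} (lam : α → α → Λ) : Prop :=
  ∀ p p₁ p₂ : α, p ⋖ p₁ → p ⋖ p₂ → p₁ ≠ p₂ →
    lam p p₁ ≠ lam p p₂ ∧
    ∀ c : List α, IsSatChain c p (p₁ ⊔ p₂) →
      lam p p₁ ∈ chainLabels lam c ∧ lam p p₂ ∈ chainLabels lam c ∧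
      ∀ l ∈ chainLabels lam c, l = lam p p₁ ∨ l = lam p p₂

section Aux

open scoped Classical

variable [Lattice α] [Fintype α]

/-- All the elements `z` with `z ⊓ y = x`. -/
noncomputable def lamSet (x y : α) : Finset α :=
  Finset.univ.filter (fun z => z ⊓ y = x)

lemma mem_lamSet {x y z : α} : z ∈ lamSet x y ↔ z ⊓ y = x := by
  simp [lamSet]

/-- The label of a cover `x ⋖ y`: the largest `z` with `z ⊓ y = x`. -/
noncomputable def lamFun (x y : α) : α :=
  if h : (lamSet x y).Nonempty then (lamSet x y).sup' h id else x

lemma le_lamFun {x y z : α} (hz : z ⊓ y = x) : z ≤ lamFun x y := by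
  have hne : (lamSet x y).Nonempty := ⟨z, mem_lamSet.2 hz⟩
  rw [lamFun, dif_pos hne]
  exact Finset.le_sup' id (mem_lamSet.2 hz)

lemma lamFun_inf (hmsd : ∀ p q r : α, p ⊓ q = p ⊓ r → p ⊓ q = p ⊓ (q ⊔ r))
    {x y : α} (h : x ≤ y) : lamFun x y ⊓ y = x := by
  have hne : (lamSet x y).Nonempty := ⟨x, mem_lamSet.2 (inf_eq_left.2 h)⟩
  rw [lamFun, dif_pos hne]
  refine Finset.sup'_induction (p := fun z => z ⊓ y = x) hne id (fun a ha b hb => ?_)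
    (fun b hb => show id b ⊓ y = x from mem_lamSet.1 hb)
  have h1 : y ⊓ a = y ⊓ b := by rw [inf_comm y a, inf_comm y b, ha, hb]
  have := hmsd y a b h1
  rw [inf_comm y a, ha] at this
  show (a ⊔ b) ⊓ y = x
  rw [inf_comm, ← this]

end Aux

/-- Monotonicity along a covering chain. -/
lemma chain_le [PartialOrder α] :
    ∀ (c : List α) (s : α), List.Chain' (· ⋖ ·) c → c.getLast? = some s →
      ∀ a ∈ c, a ≤ s := by
  intro c
  induction c with
  | nil => simp
  | cons a t ih =>
    intro s hch hl b hb
    cases t with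
    | nil =>
      simp only [List.getLast?_singleton, Option.some.injEq] at hl
      simp only [List.mem_singleton] at hb
      subst hl; subst hb; exact le_rfl
    | cons x t' =>
      have h1 : a ⋖ x := (List.isChain_cons_cons.1 hch).1
      have hch' : List.Chain' (· ⋖ ·) (x :: t') := (List.isChain_cons_cons.1 hch).2
      have hl' : (x :: t').getLast? = some s := by
        rwa [List.getLast?_cons_cons] at hl
      rcases List.mem_cons.1 hb with rfl | hb'
      · exact h1.le.trans (ih s hch' hl' x (List.mem_cons_self))
      · exact ih s hch' hl' b hb'



/-- Every finite join-distributive lattice (meet-semidistributive and upper semimodular)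
admits an SB-labeling. -/
theorem stmt10 [Lattice α] [Fintype α]
    (hmsd : ∀ p q r : α, p ⊓ q = p ⊓ r → p ⊓ q = p ⊓ (q ⊔ r))
    (husm : ∀ p q : α, (p ⊓ q) ⋖ p → (p ⊓ q) ⋖ q → (p ⋖ (p ⊔ q) ∧ q ⋖ (p ⊔ q))) :
    ∃ (Λ : Type) (lam : α → α → Λ), IsSBLabeling lam := by
  classical
  set e := Fintype.equivFin α with he
  refine ⟨Fin (Fintype.card α), fun x y => e (lamFun x y), ?_⟩
  intro p p₁ p₂ h1 h2 hne
  set s := p₁ ⊔ p₂ with hs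
  -- basic structure facts
  have hmeet : p₁ ⊓ p₂ = p := by
    rcases h1.eq_or_eq (le_inf h1.le h2.le) inf_le_left with h | h
    · exact h
    · exfalso
      have hle : p₁ ≤ p₂ := h ▸ inf_le_right
      rcases h2.eq_or_eq h1.le hle with h' | h'
      · exact h1.lt.ne' h'
      · exact hne h'
  have hcov := husm p₁ p₂ (by rw [hmeet]; exact h1) (by rw [hmeet]; exact h2)
  have hc1 : p₁ ⋖ s := hcov.1
  have hc2 : p₂ ⋖ s := hcov.2
  have hps : p < s := h1.lt.trans_le le_sup_left
  -- the only covers of p below s are p₁ and p₂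
  have hatom : ∀ x : α, p ⋖ x → x ≤ s → x = p₁ ∨ x = p₂ := by
    intro x hx hxs
    by_contra hcon
    push_neg at hcon
    obtain ⟨hx1, hx2⟩ := hcon
    have e1 : x ⊓ p₁ = p := by
      rcases hx.eq_or_eq (le_inf hx.le h1.le) inf_le_left with h | h
      · exact h
      · exfalso
        have hle : x ≤ p₁ := h ▸ inf_le_right
        rcases h1.eq_or_eq hx.le hle with h' | h'
        · exact hx.lt.ne' h'
        · exact hx1 h'
    have e2 : x ⊓ p₂ = p := by
      rcases hx.eq_or_eq (le_inf hx.le h2.le) inf_le_left with h | h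
      · exact h
      · exfalso
        have hle : x ≤ p₂ := h ▸ inf_le_right
        rcases h2.eq_or_eq hx.le hle with h' | h'
        · exact hx.lt.ne' h'
        · exact hx2 h'
    have := hmsd x p₁ p₂ (e1.trans e2.symm)
    rw [e1, ← hs, inf_eq_left.2 hxs] at this
    exact hx.lt.ne this
  -- label facts
  have hB2 : lamFun p p₂ ⊓ p₂ = p := lamFun_inf hmsd h2.le
  have hB1 : lamFun p p₁ ⊓ p₁ = p := lamFun_inf hmsd h1.le
  have hp1le : p₁ ≤ lamFun p p₂ := le_lamFun hmeet
  have hp2le : p₂ ≤ lamFun p p₁ := le_lamFun (by rw [inf_comm]; exact hmeet)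
  have hlabne : lamFun p p₁ ≠ lamFun p p₂ := by
    intro h
    have : p₂ ≤ lamFun p p₂ := h ▸ hp2le
    have : lamFun p p₂ ⊓ p₂ = p₂ := inf_eq_right.2 this
    exact h2.lt.ne (hB2.symm.trans this)
  -- key step lemma: the label up the other side agrees
  have hstep : ∀ q₁ q₂ : α, p ⋖ q₁ → p ⋖ q₂ → q₁ ⊓ q₂ = p → q₁ ⋖ (q₁ ⊔ q₂) →
      lamFun q₁ (q₁ ⊔ q₂) = lamFun p q₂ := by
    intro q₁ q₂ hq1 hq2 hq hcq
    have hA : lamFun q₁ (q₁ ⊔ q₂) ⊓ (q₁ ⊔ q₂) = q₁ := lamFun_inf hmsd le_sup_left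
    have hB : lamFun p q₂ ⊓ q₂ = p := lamFun_inf hmsd hq2.le
    apply le_antisymm
    · apply le_lamFun
      calc lamFun q₁ (q₁ ⊔ q₂) ⊓ q₂
          = lamFun q₁ (q₁ ⊔ q₂) ⊓ ((q₁ ⊔ q₂) ⊓ q₂) := by
            rw [inf_eq_right.2 (le_sup_right : q₂ ≤ q₁ ⊔ q₂)]
        _ = (lamFun q₁ (q₁ ⊔ q₂) ⊓ (q₁ ⊔ q₂)) ⊓ q₂ := by rw [inf_assoc]
        _ = q₁ ⊓ q₂ := by rw [hA]
        _ = p := hq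
    · apply le_lamFun
      have hq1le : q₁ ≤ lamFun p q₂ := le_lamFun hq
      have hle : q₁ ≤ lamFun p q₂ ⊓ (q₁ ⊔ q₂) := le_inf hq1le le_sup_left
      rcases hcq.eq_or_eq hle inf_le_right with h | h
      · exact h
      · exfalso
        have : q₂ ≤ lamFun p q₂ := le_sup_right.trans (h ▸ inf_le_left : q₁ ⊔ q₂ ≤ lamFun p q₂)
        have : lamFun p q₂ ⊓ q₂ = q₂ := inf_eq_right.2 this
        exact hq2.lt.ne (hB.symm.trans this)
  have hstep1 : lamFun p₁ s = lamFun p p₂ := hstep p₁ p₂ h1 h2 hmeet hc1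
  have hstep2 : lamFun p₂ s = lamFun p p₁ := by
    have := hstep p₂ p₁ h2 h1 (by rw [inf_comm]; exact hmeet)
      (by rw [sup_comm]; exact hc2)
    rwa [sup_comm] at this
  -- chain characterization
  have hchain : ∀ c : List α, IsSatChain c p s → c = [p, p₁, s] ∨ c = [p, p₂, s] := by
    rintro c ⟨hh, hl, hcc⟩
    match c with
    | [] => exact absurd hh (by simp)
    | a :: t =>
      have ha : a = p := by simpa using hh
      subst ha
      match t with
      | [] =>
        exfalso
        have : a = s := by simpa using hl
        exact hps.ne this
      | x :: t' =>
        have hax : a ⋖ x := (List.isChain_cons_cons.1 hcc).1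
        have hcc' : List.Chain' (· ⋖ ·) (x :: t') := (List.isChain_cons_cons.1 hcc).2
        have hl' : (x :: t').getLast? = some s := by rwa [List.getLast?_cons_cons] at hl
        have hxs : x ≤ s := chain_le _ s hcc' hl' x (List.mem_cons_self)
        have hx12 : x = p₁ ∨ x = p₂ := hatom x hax hxs
        have hcx : x ⋖ s := by rcases hx12 with rfl | rfl; exacts [hc1, hc2]
        match t' with
        | [] =>
          exfalso
          have : x = s := by simpa using hl'
          exact hcx.lt.ne this
        | w :: t'' =>
          have hxw : x ⋖ w := (List.isChain_cons_cons.1 hcc').1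
          have hcc'' : List.Chain' (· ⋖ ·) (w :: t'') := (List.isChain_cons_cons.1 hcc').2
          have hl'' : (w :: t'').getLast? = some s := by rwa [List.getLast?_cons_cons] at hl'
          have hws : w ≤ s := chain_le _ s hcc'' hl'' w (List.mem_cons_self)
          have hweq : w = s := by
            rcases hcx.eq_or_eq hxw.le hws with h | h
            · exact absurd h hxw.lt.ne'
            · exact h
          subst hweq
          match t'' with
          | [] => rcases hx12 with rfl | rfl
                  · exact Or.inl rfl
                  · exact Or.inr rfl
          | v :: t''' =>
            exfalso
            have hsv : s ⋖ v := (List.isChain_cons_cons.1 hcc'').1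
            have hvs : v ≤ s := chain_le _ s hcc'' hl'' v
              (List.mem_cons.2 (Or.inr (List.mem_cons_self)))
            exact hsv.lt.not_ge hvs
  refine ⟨fun h => hlabne (e.injective h), ?_⟩
  intro c hc
  rcases hchain c hc with rfl | rfl
  · have hlab : chainLabels (fun x y => e (lamFun x y)) [p, p₁, s]
        = [e (lamFun p p₁), e (lamFun p₁ s)] := rfl
    rw [hlab, hstep1]
    refine ⟨List.mem_cons_self, List.mem_cons.2 (Or.inr (List.mem_cons_self)), ?_⟩
    intro l hl
    rcases List.mem_cons.1 hl with rfl | hl'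
    · exact Or.inl rfl
    · rcases List.mem_singleton.1 hl' with rfl
      exact Or.inr rfl
  · have hlab : chainLabels (fun x y => e (lamFun x y)) [p, p₂, s]
        = [e (lamFun p p₂), e (lamFun p₂ s)] := rfl
    rw [hlab, hstep2]
    refine ⟨List.mem_cons.2 (Or.inr (List.mem_cons_self)), List.mem_cons_self, ?_⟩
    intro l hl
    rcases List.mem_cons.1 hl with rfl | hl'
    · exact Or.inr rfl
    · rcases List.mem_singleton.1 hl' with rfl
      exact Or.inl rfl
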